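/- In the planted clique model G(n, 1/2, k) with k ≥ 2·log₂ n, for any fixed subset S of the planted clique K with |S| ≥ 2·log₂ n, the set T of non-clique vertices adjacent to every vertex of S satisfies |T| ≤ 3·log₂ k, except with probability at most (1/n)^(log₂ k). -/

import Mathlib

open MeasureTheory

/-- Edge randomness for the planted clique model: each unordered pair of vertices gets an
independent Bernoulli(1/2) bit (edges inside the planted clique are present regardless). -/
noncomputable def edgeMeasure (n : ℕ) : Measure (Sym2 (Fin n) → Bool) :=
  Measure.pi fun _ => (PMF.bernoulli (1 / 2) (by norm_num)).toMeasure

/-- In `G(n,1/2,k)` with planted clique `K`, the set of non-clique vertices adjacent to every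
vertex of `S ⊆ K` (for a non-clique vertex, adjacency to a clique vertex is given by the
random edge bit). -/
def commonNbrs {n : ℕ} (K S : Finset (Fin n)) (ω : Sym2 (Fin n) → Bool) :
    Finset (Fin n) :=
  Finset.univ.filter fun v => v ∉ K ∧ ∀ u ∈ S, ω s(u, v) = true

open Finset in
open scoped ENNReal in
instance (n : ℕ) : IsProbabilityMeasure (edgeMeasure n) := by
  unfold edgeMeasure; infer_instance

/-- The cylinder event that all edges between `S` and `T` are present. -/
def cylEvent {n : ℕ} (S T : Finset (Fin n)) : Set (Sym2 (Fin n) → Bool) :=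
  {ω | ∀ u ∈ S, ∀ v ∈ T, ω s(u, v) = true}

open scoped ENNReal in
lemma edgeMeasure_cylinder (n : ℕ) (E : Finset (Sym2 (Fin n))) :
    edgeMeasure n {ω | ∀ e ∈ E, ω e = true} = (1 / 2 : ℝ≥0∞) ^ E.card := by
  have hset : {ω : Sym2 (Fin n) → Bool | ∀ e ∈ E, ω e = true}
      = Set.pi Set.univ (fun e => if e ∈ E then ({true} : Set Bool) else Set.univ) := by
    ext ω
    simp only [Set.mem_setOf_eq, Set.mem_pi, Set.mem_univ, forall_true_left]
    constructor
    · intro h e; by_cases he : e ∈ E <;> simp [he, h e]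
    · intro h e he; have := h e; simpa [he] using this
  rw [hset, edgeMeasure, Measure.pi_pi]
  have hfac : ∀ e : Sym2 (Fin n),
      (PMF.bernoulli (1/2 : NNReal) (by norm_num)).toMeasure
        (if e ∈ E then ({true} : Set Bool) else Set.univ)
      = if e ∈ E then (1/2 : ℝ≥0∞) else 1 := by
    intro e
    by_cases he : e ∈ E
    · rw [if_pos he, if_pos he,
        PMF.toMeasure_apply_singleton _ _ (measurableSet_singleton _)]
      simp [PMF.bernoulli_apply]
    · rw [if_neg he, if_neg he]
      rw [measure_univ]
  simp_rw [hfac]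
  rw [Finset.prod_ite_mem, Finset.univ_inter, Finset.prod_const]

open scoped ENNReal in
lemma edgeMeasure_cylEvent {n : ℕ} (S T : Finset (Fin n)) (hd : Disjoint S T) :
    edgeMeasure n (cylEvent S T) = (1 / 2 : ℝ≥0∞) ^ (S.card * T.card) := by
  set E : Finset (Sym2 (Fin n)) := (S ×ˢ T).image fun p => s(p.1, p.2) with hE
  have hset : cylEvent S T = {ω | ∀ e ∈ E, ω e = true} := by
    ext ω
    simp only [cylEvent, Set.mem_setOf_eq, hE, Finset.mem_image, Finset.mem_product]
    constructor
    · rintro h e ⟨⟨u, v⟩, ⟨hu, hv⟩, rfl⟩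
      exact h u hu v hv
    · intro h u hu v hv
      exact h _ ⟨⟨u, v⟩, ⟨hu, hv⟩, rfl⟩
  have hcard : E.card = S.card * T.card := by
    rw [hE, Finset.card_image_of_injOn, Finset.card_product]
    rintro ⟨u, v⟩ huv ⟨u', v'⟩ huv' heq
    simp only [Finset.mem_coe, Finset.mem_product] at huv huv'
    rw [Sym2.eq_iff] at heq
    rcases heq with ⟨h1, h2⟩ | ⟨h1, h2⟩
    · exact Prod.ext h1 h2 ▸ rfl
    · simp only at h1 h2
      exact absurd (h1 ▸ huv.1) fun h => Finset.disjoint_left.mp hd h huv'.2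
  rw [hset, edgeMeasure_cylinder, hcard]

/-- The key real inequality behind the union bound. -/
lemma key_ineq (n k s t : ℕ) (h2n : 2 ≤ n) (h2k : 2 ≤ k)
    (hs : 2 * Real.logb 2 n ≤ s) (ht : 3 * Real.logb 2 k ≤ t) :
    (k : ℝ) ^ s * (n : ℝ) ^ t * (1 / 2 : ℝ) ^ (s * t) ≤
      ((1 : ℝ) / n) ^ (Real.logb 2 k) := by
  set L := Real.logb 2 n with hLdef
  set M := Real.logb 2 k with hMdef
  have hL : 1 ≤ L := by
    rw [hLdef, show (1:ℝ) = Real.logb 2 2 by simp]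
    exact Real.logb_le_logb_of_le (by norm_num) (by norm_num) (by exact_mod_cast h2n)
  have hM : 1 ≤ M := by
    rw [hMdef, show (1:ℝ) = Real.logb 2 2 by simp]
    exact Real.logb_le_logb_of_le (by norm_num) (by norm_num) (by exact_mod_cast h2k)
  have hkpos : (0:ℝ) < k := by positivity
  have hnpos : (0:ℝ) < n := by positivity
  have hkeq : (k : ℝ) = (2 : ℝ) ^ M := by
    rw [hMdef, Real.rpow_logb (by norm_num) (by norm_num) hkpos]
  have hneq : (n : ℝ) = (2 : ℝ) ^ L := by
    rw [hLdef, Real.rpow_logb (by norm_num) (by norm_num) hnpos]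
  have e1 : (k:ℝ) ^ s = (2:ℝ) ^ (M * s) := by
    rw [hkeq, ← Real.rpow_natCast ((2:ℝ)^M) s, ← Real.rpow_mul (by norm_num)]
  have e2 : (n:ℝ) ^ t = (2:ℝ) ^ (L * t) := by
    rw [hneq, ← Real.rpow_natCast ((2:ℝ)^L) t, ← Real.rpow_mul (by norm_num)]
  have e3 : (1/2 : ℝ) ^ (s * t) = (2:ℝ) ^ (-((s:ℝ) * t)) := by
    have : (1/2 : ℝ) = (2:ℝ) ^ (-1 : ℝ) := by rw [Real.rpow_neg_one]; norm_num
    rw [this, ← Real.rpow_natCast ((2:ℝ)^(-1:ℝ)) (s*t), ← Real.rpow_mul (by norm_num)]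
    push_cast
    ring_nf
  have e4 : ((1:ℝ)/n) ^ M = (2:ℝ) ^ (-(L * M)) := by
    have : (1:ℝ)/n = (2:ℝ) ^ (-L) := by
      rw [hneq, Real.rpow_neg (by norm_num), one_div]
    rw [this, ← Real.rpow_mul (by norm_num)]
    ring_nf
  rw [e1, e2, e3, e4, ← Real.rpow_add (by norm_num), ← Real.rpow_add (by norm_num)]
  apply Real.rpow_le_rpow_of_exponent_le (by norm_num)
  nlinarith [mul_nonneg (by linarith : (0:ℝ) ≤ (s:ℝ) - 2*L) (by linarith : (0:ℝ) ≤ (t:ℝ) - M),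
    mul_nonneg (by linarith : (0:ℝ) ≤ L) (by linarith : (0:ℝ) ≤ (t:ℝ) - 3*M)]

/-- in the planted clique model with clique `K` of size `k ≥ 2 log₂ n`,
except with probability at most `(1/n)^(log₂ k)`, simultaneously every subset `S ⊆ K` with
`|S| ≥ 2 log₂ n` has at most `3 log₂ k` non-clique vertices adjacent to all of `S`. -/
theorem stmt_5 (n k : ℕ) (hn : 0 < n) (hk : 2 * Real.logb 2 n ≤ (k : ℝ))
    (K : Finset (Fin n)) (hK : K.card = k) :
    ((edgeMeasure n)
        {ω : Sym2 (Fin n) → Bool | ∃ S ⊆ K,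
          2 * Real.logb 2 n ≤ (S.card : ℝ) ∧
          3 * Real.logb 2 k < ((commonNbrs K S ω).card : ℝ)}).toReal ≤
      ((1 : ℝ) / n) ^ (Real.logb 2 k) := by
  -- trivial case n = 1
  rcases eq_or_lt_of_le (Nat.one_le_iff_ne_zero.mpr hn.ne') with h1 | h2n
  · have : (1:ℝ)/n = 1 := by rw [← h1]; norm_num
    rw [this, Real.one_rpow]
    exact ENNReal.toReal_le_of_le_ofReal zero_le_one (by simpa using prob_le_one)
  -- now 2 ≤ n
  have h2n' : 2 ≤ n := h2n
  have hL1 : (1:ℝ) ≤ Real.logb 2 n := by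
    rw [show (1:ℝ) = Real.logb 2 2 by simp]
    exact Real.logb_le_logb_of_le (by norm_num) (by norm_num) (by exact_mod_cast h2n')
  have h2k : 2 ≤ k := by
    have : (2:ℝ) ≤ (k:ℝ) := le_trans (by linarith) hk
    exact_mod_cast this
  have hM0 : (0:ℝ) ≤ 3 * Real.logb 2 k := by
    have : (0:ℝ) ≤ Real.logb 2 k := by
      apply Real.logb_nonneg (by norm_num)
      exact_mod_cast Nat.one_le_of_lt h2k
    linarith
  set s := ⌈2 * Real.logb 2 n⌉₊ with hsdef
  set t := ⌊3 * Real.logb 2 k⌋₊ + 1 with htdef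
  have hs : 2 * Real.logb 2 n ≤ (s:ℝ) := Nat.le_ceil _
  have ht : 3 * Real.logb 2 k < (t:ℝ) := by
    rw [htdef]; push_cast; exact Nat.lt_floor_add_one _
  -- inclusion in the union of cylinder events
  have hincl : {ω : Sym2 (Fin n) → Bool | ∃ S ⊆ K,
      2 * Real.logb 2 n ≤ (S.card : ℝ) ∧
      3 * Real.logb 2 k < ((commonNbrs K S ω).card : ℝ)} ⊆
      ⋃ S' ∈ K.powersetCard s, ⋃ T ∈ Kᶜ.powersetCard t, cylEvent S' T := by
    rintro ω ⟨S, hSK, hScard, hTcard⟩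
    have hsS : s ≤ S.card := Nat.ceil_le.mpr hScard
    obtain ⟨S', hS'S, hS'card⟩ := Finset.exists_subset_card_eq hsS
    have htT : t ≤ (commonNbrs K S ω).card := by
      rw [htdef]
      exact Nat.succ_le_of_lt ((Nat.floor_lt hM0).mpr hTcard)
    obtain ⟨T, hTsub, hTc⟩ := Finset.exists_subset_card_eq htT
    have hTK : T ⊆ Kᶜ := fun v hv => by
      have := hTsub hv
      simp only [commonNbrs, Finset.mem_filter] at this
      simpa using this.2.1
    simp only [Set.mem_iUnion, exists_prop]
    refine ⟨S', Finset.mem_powersetCard.mpr ⟨hS'S.trans hSK, hS'card⟩,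
      T, Finset.mem_powersetCard.mpr ⟨hTK, hTc⟩, ?_⟩
    intro u hu v hv
    have hvc := hTsub hv
    simp only [commonNbrs, Finset.mem_filter] at hvc
    exact hvc.2.2 u (hS'S hu)
  -- union bound
  have hub : edgeMeasure n {ω : Sym2 (Fin n) → Bool | ∃ S ⊆ K,
      2 * Real.logb 2 n ≤ (S.card : ℝ) ∧
      3 * Real.logb 2 k < ((commonNbrs K S ω).card : ℝ)} ≤
      ((k ^ s * n ^ t : ℕ) : ENNReal) * (1 / 2 : ENNReal) ^ (s * t) := by
    refine le_trans (measure_mono hincl) ?_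
    refine le_trans (measure_biUnion_finset_le _ _) ?_
    have hterm : ∀ S' ∈ K.powersetCard s,
        edgeMeasure n (⋃ T ∈ Kᶜ.powersetCard t, cylEvent S' T) ≤
        ((n:ENNReal) ^ t) * (1 / 2 : ENNReal) ^ (s * t) := by
      intro S' hS'
      refine le_trans (measure_biUnion_finset_le _ _) ?_
      obtain ⟨hS'K, hS'c⟩ := Finset.mem_powersetCard.mp hS'
      have : ∀ T ∈ Kᶜ.powersetCard t,
          edgeMeasure n (cylEvent S' T) = (1 / 2 : ENNReal) ^ (s * t) := by
        intro T hT
        obtain ⟨hTK, hTc⟩ := Finset.mem_powersetCard.mp hT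
        rw [edgeMeasure_cylEvent S' T, hS'c, hTc]
        exact Finset.disjoint_left.mpr fun a ha ha' =>
          (Finset.mem_compl.mp (hTK ha')) (hS'K ha)
      rw [Finset.sum_congr rfl this, Finset.sum_const, nsmul_eq_mul]
      refine mul_le_mul_left ?_ _
      refine le_trans (Nat.cast_le.mpr (Finset.card_powersetCard t Kᶜ ▸
        Nat.choose_le_pow Kᶜ.card t)) ?_
      exact_mod_cast Nat.cast_le.mpr (Nat.pow_le_pow_left (Finset.card_le_univ Kᶜ |>.trans
        (by simp)) t)
    refine le_trans (Finset.sum_le_sum hterm) ?_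
    rw [Finset.sum_const, nsmul_eq_mul]
    rw [Finset.card_powersetCard, hK]
    push_cast
    rw [← mul_assoc]
    refine mul_le_mul_left (mul_le_mul_left ?_ _) _
    exact_mod_cast Nat.choose_le_pow k s
  -- convert to reals
  have hBne : ((k ^ s * n ^ t : ℕ) : ENNReal) * (1 / 2 : ENNReal) ^ (s * t) ≠ ⊤ := by
    refine ENNReal.mul_ne_top (ENNReal.natCast_ne_top _) ?_
    exact ENNReal.pow_ne_top (by norm_num)
  refine le_trans (ENNReal.toReal_mono hBne hub) ?_
  rw [ENNReal.toReal_mul, ENNReal.toReal_pow, ENNReal.toReal_natCast]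
  have h12 : (1 / 2 : ENNReal).toReal = (1/2 : ℝ) := by
    rw [ENNReal.toReal_div]; simp
  rw [h12]
  push_cast
  exact key_ineq n k s t h2n' h2k hs (le_of_lt ht)
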